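/- Let T be a rank-one bounded operator on a complex Hilbert space H given by T f = ⟨f, g⟩ h for fixed nonzero vectors g, h ∈ H with g ⊥ h. Then the numerical range of T is the closed disc centred at the origin with radius ‖g‖·‖h‖/2. -/

import Mathlib

/-- Let `T` be the rank-one operator `T f = ⟨f, g⟩ h` on a complex Hilbert space,
with `g, h` nonzero and `g ⊥ h`.  (In Mathlib's convention, `⟨f, g⟩ = inner ℂ g f`.)
Then the numerical range `{⟨Tf, f⟩ : ‖f‖ = 1}` is the closed disc centred at the
origin with radius `‖g‖·‖h‖/2`. -/
theorem stmt_12 {H : Type*} [NormedAddCommGroup H] [InnerProductSpace ℂ H]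
    (g h : H) (hg : g ≠ 0) (hh : h ≠ 0) (horth : (inner ℂ g h : ℂ) = 0) :
    {z : ℂ | ∃ f : H, ‖f‖ = 1 ∧ (inner ℂ f ((inner ℂ g f : ℂ) • h) : ℂ) = z} =
      Metric.closedBall 0 (‖g‖ * ‖h‖ / 2) := by
  have ng : (0:ℝ) < ‖g‖ := norm_pos_iff.mpr hg
  have nh : (0:ℝ) < ‖h‖ := norm_pos_iff.mpr hh
  have ngC : ((‖g‖:ℝ) : ℂ) ≠ 0 := Complex.ofReal_ne_zero.mpr ng.ne'
  have nhC : ((‖h‖:ℝ) : ℂ) ≠ 0 := Complex.ofReal_ne_zero.mpr nh.ne'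
  have horth' : (inner ℂ h g : ℂ) = 0 := by
    rw [← inner_conj_symm, horth, map_zero]
  set v0 : H := ((‖g‖⁻¹ : ℝ) : ℂ) • g with hv0
  set v1 : H := ((‖h‖⁻¹ : ℝ) : ℂ) • h with hv1
  have hgg : (inner ℂ g g : ℂ) = ((‖g‖:ℝ):ℂ)^2 := inner_self_eq_norm_sq_to_K g
  have hhh : (inner ℂ h h : ℂ) = ((‖h‖:ℝ):ℂ)^2 := inner_self_eq_norm_sq_to_K h
  have hv01 : (inner ℂ v0 v1 : ℂ) = 0 := by
    simp [hv0, hv1, inner_smul_left, inner_smul_right, horth]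
  have hv10 : (inner ℂ v1 v0 : ℂ) = 0 := by
    rw [← inner_conj_symm, hv01, map_zero]
  have hnv0 : ‖v0‖ = 1 := by
    rw [hv0, norm_smul, Complex.norm_real, Real.norm_eq_abs,
      abs_of_pos (inv_pos.mpr ng), inv_mul_cancel₀ ng.ne']
  have hnv1 : ‖v1‖ = 1 := by
    rw [hv1, norm_smul, Complex.norm_real, Real.norm_eq_abs,
      abs_of_pos (inv_pos.mpr nh), inv_mul_cancel₀ nh.ne']
  have hon : Orthonormal ℂ (fun i : Fin 2 => if i = 0 then v0 else v1) := by
    rw [orthonormal_iff_ite]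
    intro i j
    fin_cases i <;> fin_cases j <;>
      simp [inner_self_eq_norm_sq_to_K, hnv0, hnv1, hv01, hv10]
  have hgv0 : (inner ℂ g v0 : ℂ) = ((‖g‖:ℝ):ℂ) := by
    rw [hv0, inner_smul_right, hgg]
    push_cast
    field_simp
  have hgv1 : (inner ℂ g v1 : ℂ) = 0 := by
    rw [hv1, inner_smul_right, horth, mul_zero]
  have hv0h : (inner ℂ v0 h : ℂ) = 0 := by
    rw [hv0, inner_smul_left, horth, mul_zero]
  have hv1h : (inner ℂ v1 h : ℂ) = ((‖h‖:ℝ):ℂ) := by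
    rw [hv1, inner_smul_left, hhh, Complex.conj_ofReal]
    push_cast
    field_simp
  ext z
  simp only [Set.mem_setOf_eq, Metric.mem_closedBall, dist_zero_right]
  constructor
  · rintro ⟨f, hf, rfl⟩
    have hbes := hon.sum_inner_products_le (s := Finset.univ) (x := f)
    rw [Fin.sum_univ_two] at hbes
    simp only [hf, one_pow] at hbes
    norm_num at hbes
    have hval : (inner ℂ f ((inner ℂ g f : ℂ) • h) : ℂ) = inner ℂ g f * inner ℂ f h := by
      rw [inner_smul_right]
    rw [hval, norm_mul]
    have h1 : ‖(inner ℂ g f : ℂ)‖ = ‖g‖ * ‖(inner ℂ v0 f : ℂ)‖ := by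
      rw [hv0, inner_smul_left, norm_mul]
      simp [abs_of_pos ng]
      field_simp
    have h2 : ‖(inner ℂ f h : ℂ)‖ = ‖h‖ * ‖(inner ℂ v1 f : ℂ)‖ := by
      rw [← inner_conj_symm, RCLike.norm_conj, hv1, inner_smul_left, norm_mul]
      simp [abs_of_pos nh]
      field_simp
    rw [h1, h2]
    nlinarith [sq_nonneg (‖(inner ℂ v0 f : ℂ)‖ - ‖(inner ℂ v1 f : ℂ)‖),
      norm_nonneg (inner ℂ v0 f : ℂ), norm_nonneg (inner ℂ v1 f : ℂ),
      mul_pos ng nh]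
  · intro hz
    set c : ℝ := ‖z‖ / (‖g‖ * ‖h‖) with hc
    have hc0 : 0 ≤ c := div_nonneg (norm_nonneg z) (by positivity)
    have hc2 : c ≤ 1/2 := by
      rw [hc, div_le_div_iff₀ (by positivity) (by norm_num)]
      nlinarith
    set d : ℝ := Real.sqrt (1 - 4*c^2) with hd
    have hd0 : 0 ≤ d := Real.sqrt_nonneg _
    have hd2 : d^2 = 1 - 4*c^2 := Real.sq_sqrt (by nlinarith)
    have hd1 : d ≤ 1 := by nlinarith
    set s : ℝ := Real.sqrt ((1+d)/2) with hs
    set t : ℝ := Real.sqrt ((1-d)/2) with ht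
    have hs0 : 0 ≤ s := Real.sqrt_nonneg _
    have ht0 : 0 ≤ t := Real.sqrt_nonneg _
    have hs2 : s^2 = (1+d)/2 := Real.sq_sqrt (by linarith)
    have ht2 : t^2 = (1-d)/2 := Real.sq_sqrt (by linarith)
    have hst : s * t = c := by
      have hsq : (s*t)^2 = c^2 := by
        rw [mul_pow, hs2, ht2]
        linear_combination (-1/4 : ℝ) * hd2
      calc s*t = Real.sqrt ((s*t)^2) := (Real.sqrt_sq (mul_nonneg hs0 ht0)).symm
        _ = Real.sqrt (c^2) := by rw [hsq]
        _ = c := Real.sqrt_sq hc0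
    set u : ℂ := if z = 0 then 1 else z / ‖z‖ with hu
    have hu1 : ‖u‖ = 1 := by
      rw [hu]
      split_ifs with h0
      · simp
      · rw [norm_div, Complex.norm_real, Real.norm_eq_abs, abs_norm,
          div_self (norm_ne_zero_iff.mpr h0)]
    have huz : u * ‖z‖ = z := by
      rw [hu]
      split_ifs with h0
      · simp [h0]
      · exact div_mul_cancel₀ z (Complex.ofReal_ne_zero.mpr (norm_ne_zero_iff.mpr h0))
    refine ⟨(u * s) • v0 + (t:ℂ) • v1, ?_, ?_⟩
    · have hinner : (inner ℂ ((u * s) • v0) ((t:ℂ) • v1) : ℂ) = 0 := by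
        rw [inner_smul_left, inner_smul_right, hv01]
        ring
      have hsq : ‖(u * s) • v0 + (t:ℂ) • v1‖^2 = 1 := by
        rw [@norm_add_sq ℂ, hinner]
        simp only [map_zero, mul_zero, add_zero, norm_smul, hnv0, hnv1,
          norm_mul, hu1, Complex.norm_real, Real.norm_eq_abs,
          abs_of_nonneg hs0, abs_of_nonneg ht0]
        linear_combination hs2 + ht2
      rw [← Real.sqrt_one, ← hsq, Real.sqrt_sq (norm_nonneg _)]
    · have e1 : (inner ℂ g ((u * s) • v0 + (t:ℂ) • v1) : ℂ) = u * s * ‖g‖ := by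
        rw [inner_add_right, inner_smul_right, hgv0, inner_smul_right, hgv1]
        ring
      have e2 : (inner ℂ ((u * s) • v0 + (t:ℂ) • v1) h : ℂ) = t * ‖h‖ := by
        rw [inner_add_left, inner_smul_left, hv0h, inner_smul_left, hv1h, Complex.conj_ofReal]
        ring
      have hval : (inner ℂ ((u * s) • v0 + (t:ℂ) • v1)
          ((inner ℂ g ((u * s) • v0 + (t:ℂ) • v1) : ℂ) • h) : ℂ)
          = inner ℂ g ((u * s) • v0 + (t:ℂ) • v1) *
            inner ℂ ((u * s) • v0 + (t:ℂ) • v1) h := by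
        rw [inner_smul_right]
      rw [hval, e1, e2]
      have heq : u * (s:ℂ) * ((‖g‖:ℝ):ℂ) * ((t:ℂ) * ((‖h‖:ℝ):ℂ))
          = u * ((s * t * (‖g‖ * ‖h‖) : ℝ) : ℂ) := by
        push_cast
        ring
      rw [heq, hst]
      have hcz : c * (‖g‖ * ‖h‖) = ‖z‖ := by
        rw [hc]
        field_simp
      rw [hcz, huz]
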